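/- arXiv:2010.05331 — 5 statements merged into one kernel-verified Lean document; each statement's English description precedes it below -/
import Mathlib

section
/- The coefficients of the polynomial ∏_{ℓ=1}^m (1 + q + ... + q^{a_ℓ}) are unimodal: writing the polynomial as ∑_{i=0}^N c_i q^i with N = a_1+...+a_m, we have c_0 ≤ c_1 ≤ ... ≤ c_{⌊N/2⌋} and c_{⌈N/2⌉} ≥ ... ≥ c_N. -/
open Polynomial Finset

/-- A nonnegative sequence, symmetric about `n`, vanishing for negative indices,
and nondecreasing up to `n/2`. -/
structure GoodSeq (f : ℤ → ℤ) (n : ℤ) : Prop where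
  nonneg : ∀ k, 0 ≤ f k
  symm : ∀ k, f (n - k) = f k
  mono : ∀ j k : ℤ, j ≤ k → 2 * k ≤ n → f j ≤ f k
  vanish_neg : ∀ k, k < 0 → f k = 0

lemma GoodSeq.mono' {f : ℤ → ℤ} {n : ℤ} (h : GoodSeq f n) :
    ∀ j k : ℤ, j ≤ k → 2 * k ≤ n + 1 → f j ≤ f k := by
  intro j k hjk hk
  rcases le_or_gt (2 * k) n with h2 | h2
  · exact h.mono j k hjk h2
  · have hkn : 2 * k = n + 1 := by omega
    rcases eq_or_lt_of_le hjk with rfl | hlt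
    · exact le_refl _
    · have hfk : f k = f (k - 1) := by
        have := h.symm (k - 1)
        have hnk : n - (k - 1) = k := by omega
        rw [hnk] at this
        exact this
      rw [hfk]
      exact h.mono j (k - 1) (by omega) (by omega)

lemma mono_of_step {g : ℤ → ℤ} {M : ℤ}
    (hstep : ∀ i : ℤ, 2 * (i + 1) ≤ M → g i ≤ g (i + 1)) :
    ∀ j k : ℤ, j ≤ k → 2 * k ≤ M → g j ≤ g k := by
  have key : ∀ (d : ℕ) (j : ℤ), 2 * (j + d) ≤ M → g j ≤ g (j + d) := by
    intro d
    induction d with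
    | zero => intro j _; simp
    | succ e ih =>
      intro j hj
      have h1 : g j ≤ g (j + e) := ih j (by push_cast at hj ⊢; omega)
      have h2 : g (j + e) ≤ g (j + e + 1) := hstep (j + e) (by push_cast at hj ⊢; omega)
      have : (j + (e + 1 : ℕ) : ℤ) = j + e + 1 := by push_cast; ring
      rw [this]
      exact h1.trans h2
  intro j k hjk hk
  obtain ⟨d, rfl⟩ : ∃ d : ℕ, k = j + d := ⟨(k - j).toNat, by omega⟩
  exact key d j hk

lemma goodseq_conv {f : ℤ → ℤ} {n : ℤ} (hn : 0 ≤ n) (h : GoodSeq f n) (a : ℕ) :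
    GoodSeq (fun k => ∑ t ∈ range (a + 1), f (k - t)) (n + a) := by
  have vanish_high : ∀ k, n < k → f k = 0 := by
    intro k hk
    have := h.symm (n - k)
    have h1 : n - (n - k) = k := by ring
    rw [h1] at this
    rw [this]
    exact h.vanish_neg _ (by omega)
  constructor
  · intro k
    exact Finset.sum_nonneg fun t _ => h.nonneg _
  · intro k
    have e1 : ∀ t ∈ range (a + 1), f (n + a - k - t) = f (k + t - a) := by
      intro t ht
      have := h.symm (k + t - a)
      have h1 : n - (k + t - a) = n + a - k - t := by ring
      rw [h1] at this
      exact this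
    calc ∑ t ∈ range (a + 1), f (n + a - k - t)
        = ∑ t ∈ range (a + 1), f (k + t - a) := Finset.sum_congr rfl e1
      _ = ∑ t ∈ range (a + 1), f (k + (a - t : ℕ) - a) := (Finset.sum_range_reflect _ _).symm
      _ = ∑ t ∈ range (a + 1), f (k - t) := by
          apply Finset.sum_congr rfl
          intro t ht
          simp only [Finset.mem_range] at ht
          congr 1
          have : ((a - t : ℕ) : ℤ) = (a : ℤ) - t := by
            have : t ≤ a := by omega
            push_cast [this]; ring
          rw [this]; ring
  · apply mono_of_step
    intro i hi
    have split1 : ∑ t ∈ range (a + 1), f (i + 1 - t)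
        = (∑ t ∈ range a, f (i - t)) + f (i + 1) := by
      rw [Finset.sum_range_succ']
      congr 1
      · apply Finset.sum_congr rfl
        intro t _
        congr 1
        push_cast; ring
      · norm_num
    have split2 : ∑ t ∈ range (a + 1), f (i - t)
        = (∑ t ∈ range a, f (i - t)) + f (i - a) := Finset.sum_range_succ _ _
    rw [split1, split2]
    have key : f (i - a) ≤ f (i + 1) := by
      rcases le_or_gt (2 * (i + 1)) (n + 1) with hc | hc
      · exact h.mono' (i - a) (i + 1) (by omega) hc
      · have hs : f (i + 1) = f (n - i - 1) := by
          have := h.symm (i + 1)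
          have h1 : n - (i + 1) = n - i - 1 := by ring
          rw [h1] at this
          exact this.symm
        rw [hs]
        exact h.mono (i - a) (n - i - 1) (by omega) (by omega)
    omega
  · intro k hk
    apply Finset.sum_eq_zero
    intro t _
    exact h.vanish_neg _ (by omega)

/-- Coefficient sequence of a polynomial, extended by zero to negative indices. -/
def fP (P : Polynomial ℤ) : ℤ → ℤ := fun k => if 0 ≤ k then P.coeff k.toNat else 0

lemma fP_conv (P : Polynomial ℤ) (a : ℕ) (k : ℤ) :
    fP (P * ∑ t ∈ range (a + 1), (X : Polynomial ℤ) ^ t) k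
      = ∑ t ∈ range (a + 1), fP P (k - t) := by
  unfold fP
  by_cases hk : 0 ≤ k
  · simp only [hk, if_true]
    rw [Finset.mul_sum, Polynomial.finset_sum_coeff]
    apply Finset.sum_congr rfl
    intro t ht
    rw [Polynomial.coeff_mul_X_pow']
    by_cases htk : (t : ℤ) ≤ k
    · have h0 : (0 : ℤ) ≤ k - t := by omega
      have h1 : t ≤ k.toNat := by omega
      simp only [h1, if_true, h0, if_true]
      congr 1
      omega
    · have h1 : ¬ t ≤ k.toNat := by omega
      have h0 : ¬ (0 : ℤ) ≤ k - t := by omega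
      simp [h1, h0, htk]
  · simp only [hk, if_false]
    symm
    apply Finset.sum_eq_zero
    intro t _
    have : ¬ (0 : ℤ) ≤ k - t := by omega
    simp [this, show ¬ (t : ℤ) ≤ k by omega]

lemma good_prod (m : ℕ) (a : Fin m → ℕ) :
    GoodSeq (fP (∏ ℓ, ∑ k ∈ range (a ℓ + 1), (X : Polynomial ℤ) ^ k)) (∑ ℓ, (a ℓ : ℤ)) := by
  induction m with
  | zero =>
    simp only [Finset.univ_eq_empty, Finset.prod_empty, Finset.sum_empty]
    constructor
    · intro k
      unfold fP
      split <;> simp [Polynomial.coeff_one]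
      split <;> simp
    · intro k
      unfold fP
      rcases lt_trichotomy k 0 with h | h | h
      · have h1 : ¬ (0:ℤ) ≤ k := by omega
        have h2 : (0:ℤ) ≤ 0 - k := by omega
        have h3 : (0 - k).toNat ≠ 0 := by omega
        simp [h1, h2, Polynomial.coeff_one, h3]
      · simp [h]
      · have h1 : (0:ℤ) ≤ k := by omega
        have h2 : ¬ (0:ℤ) ≤ 0 - k := by omega
        have h3 : k.toNat ≠ 0 := by omega
        simp only [h1, if_true, h2, if_false, Polynomial.coeff_one, h3, if_false]
    · intro j k hjk hk
      have hk0 : k ≤ 0 := by omega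
      unfold fP
      rcases lt_or_eq_of_le hk0 with h | h
      · have h1 : ¬ (0:ℤ) ≤ k := by omega
        have h2 : ¬ (0:ℤ) ≤ j := by omega
        simp [h1, h2]
      · subst h
        rcases lt_or_eq_of_le hjk with h | h
        · have h1 : ¬ (0:ℤ) ≤ j := by omega
          simp [h1, Polynomial.coeff_one]
        · subst h
          simp
    · intro k hk
      unfold fP
      have : ¬ (0:ℤ) ≤ k := by omega
      simp [this]
  | succ m ih =>
    rw [Fin.prod_univ_succ, Fin.sum_univ_succ]
    have hgood := ih (fun ℓ => a ℓ.succ)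
    have hn : (0 : ℤ) ≤ ∑ ℓ : Fin m, (a ℓ.succ : ℤ) :=
      Finset.sum_nonneg fun ℓ _ => by positivity
    have hconv := goodseq_conv hn hgood (a 0)
    have heq : ∀ k, fP ((∑ t ∈ range (a 0 + 1), (X : Polynomial ℤ) ^ t) *
        ∏ ℓ : Fin m, ∑ t ∈ range (a ℓ.succ + 1), (X : Polynomial ℤ) ^ t) k
        = ∑ t ∈ range (a 0 + 1),
            fP (∏ ℓ : Fin m, ∑ t ∈ range (a ℓ.succ + 1), (X : Polynomial ℤ) ^ t) (k - t) := by
      intro k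
      rw [mul_comm]
      exact fP_conv _ _ k
    have hM : (a 0 : ℤ) + ∑ ℓ : Fin m, (a ℓ.succ : ℤ)
        = (∑ ℓ : Fin m, (a ℓ.succ : ℤ)) + (a 0 : ℕ) := by push_cast; ring
    rw [hM]
    constructor
    · intro k; rw [heq]; exact hconv.nonneg k
    · intro k; rw [heq, heq]; exact hconv.symm k
    · intro j k hjk hk; rw [heq, heq]; exact hconv.mono j k hjk hk
    · intro k hk; rw [heq]; exact hconv.vanish_neg k hk

/-- The coefficients of `∏_{ℓ=1}^m (1 + q + ... + q^{a_ℓ})` are unimodal: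
writing the polynomial as `∑_{i=0}^N c_i q^i` with `N = a_1 + ... + a_m`, we have
`c_0 ≤ c_1 ≤ ... ≤ c_{⌊N/2⌋}` and `c_{⌈N/2⌉} ≥ ... ≥ c_N`. -/
theorem unimodal_coefficients (m : ℕ) (a : Fin m → ℕ) (ha : ∀ ℓ, 0 < a ℓ)
    (N : ℕ) (hN : N = ∑ ℓ, a ℓ)
    (c : ℕ → ℤ)
    (hc : ∀ i, c i =
      (∏ ℓ : Fin m, ∑ k ∈ Finset.range (a ℓ + 1), (Polynomial.X : Polynomial ℤ) ^ k).coeff i) :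
    (∀ i, i + 1 ≤ N / 2 → c i ≤ c (i + 1)) ∧
      (∀ i, (N + 1) / 2 ≤ i → i < N → c (i + 1) ≤ c i) := by
  have hgood := good_prod m a
  have hNZ : (∑ ℓ, (a ℓ : ℤ)) = (N : ℤ) := by rw [hN]; push_cast; ring
  rw [hNZ] at hgood
  set P := ∏ ℓ : Fin m, ∑ k ∈ Finset.range (a ℓ + 1), (Polynomial.X : Polynomial ℤ) ^ k with hP
  have hcf : ∀ i : ℕ, c i = fP P (i : ℤ) := by
    intro i
    rw [hc i]
    unfold fP
    simp
  constructor
  · intro i hi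
    rw [hcf, hcf]
    have : ((i : ℤ) + 1) = ((i + 1 : ℕ) : ℤ) := by push_cast; ring
    rw [← this]
    exact hgood.mono i (i + 1) (by omega) (by omega)
  · intro i hi hiN
    rw [hcf, hcf]
    have h1 : fP P ((i + 1 : ℕ) : ℤ) = fP P ((N : ℤ) - (i + 1 : ℕ)) := (hgood.symm _).symm
    have h2 : fP P ((i : ℕ) : ℤ) = fP P ((N : ℤ) - i) := (hgood.symm _).symm
    rw [h1, h2]
    exact hgood.mono _ _ (by push_cast; omega) (by push_cast; omega)
end

section
/- For any integer r with 0 ≤ r ≤ N, the number N_m(r; a_1,...,a_m) of ways to write r = x_1 + ... + x_m with 0 ≤ x_i ≤ a_i is at most N_m(⌊N/2⌋; a_1,...,a_m), where N = a_1 + ... + a_m. -/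
open Finset

/-- Count of lattice points in the box with coordinate sum `r`. -/
def cnt (m : ℕ) (a : Fin m → ℕ) (r : ℕ) : ℕ :=
  ((Fintype.piFinset fun i => Finset.range (a i + 1)).filter fun x => ∑ i, x i = r).card

lemma cnt_symm (m : ℕ) (a : Fin m → ℕ) (r : ℕ) (hr : r ≤ ∑ i, a i) :
    cnt m a r = cnt m a ((∑ i, a i) - r) := by
  classical
  apply Finset.card_bij (fun x _ => fun i => a i - x i)
  · intro x hx
    simp only [Finset.mem_filter, Fintype.mem_piFinset, Finset.mem_range] at hx ⊢
    obtain ⟨h1, h2⟩ := hx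
    refine ⟨fun i => by have := h1 i; omega, ?_⟩
    have key : ∑ i, (x i + (a i - x i)) = ∑ i, a i :=
      Finset.sum_congr rfl fun i _ => by have := h1 i; omega
    rw [Finset.sum_add_distrib] at key
    omega
  · intro x hx y hy h
    simp only [Finset.mem_filter, Fintype.mem_piFinset, Finset.mem_range] at hx hy
    funext i
    have hxi := hx.1 i
    have hyi := hy.1 i
    have := congrFun h i
    omega
  · intro y hy
    simp only [Finset.mem_filter, Fintype.mem_piFinset, Finset.mem_range] at hy
    obtain ⟨h1, h2⟩ := hy
    refine ⟨fun i => a i - y i, ?_, ?_⟩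
    · simp only [Finset.mem_filter, Fintype.mem_piFinset, Finset.mem_range]
      refine ⟨fun i => by have := h1 i; omega, ?_⟩
      have key : ∑ i, (y i + (a i - y i)) = ∑ i, a i :=
        Finset.sum_congr rfl fun i _ => by have := h1 i; omega
      rw [Finset.sum_add_distrib] at key
      omega
    · funext i; have := h1 i; simp only; omega

/-- Decomposition by the last coordinate. -/
lemma cnt_succ (m : ℕ) (a : Fin (m + 1) → ℕ) (r : ℕ) :
    cnt (m + 1) a r =
      ∑ s ∈ Finset.Icc (r - a (Fin.last m)) r, cnt m (fun i => a i.castSucc) s := by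
  classical
  unfold cnt
  rw [Finset.card_eq_sum_card_fiberwise
    (f := fun x : Fin (m + 1) → ℕ => ∑ i : Fin m, x i.castSucc)
    (t := Finset.Icc (r - a (Fin.last m)) r)]
  · apply Finset.sum_congr rfl
    intro s hs
    rw [Finset.mem_Icc] at hs
    apply Finset.card_bij' (fun x _ => fun i : Fin m => x i.castSucc)
      (fun y _ => Fin.snoc y (r - s))
    case hi =>
      intro x hx
      simp only [Finset.mem_filter, Fintype.mem_piFinset, Finset.mem_range] at hx ⊢
      exact ⟨fun i => hx.1.1 i.castSucc, hx.2⟩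
    case hj =>
      intro y hy
      simp only [Finset.mem_filter, Fintype.mem_piFinset, Finset.mem_range] at hy ⊢
      have hb : r - s ≤ a (Fin.last m) := by omega
      refine ⟨⟨?_, ?_⟩, ?_⟩
      · intro i
        refine Fin.lastCases ?_ ?_ i
        · rw [Fin.snoc_last]; omega
        · intro j; rw [Fin.snoc_castSucc]; exact hy.1 j
      · rw [Fin.sum_univ_castSucc]
        simp only [Fin.snoc_castSucc, Fin.snoc_last]
        omega
      · simp only [Fin.snoc_castSucc]
        exact hy.2
    case left_inv =>
      intro x hx
      simp only [Finset.mem_filter, Fintype.mem_piFinset, Finset.mem_range] at hx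
      have hsum := hx.1.2
      rw [Fin.sum_univ_castSucc] at hsum
      have hx2 := hx.2
      funext i
      refine Fin.lastCases ?_ ?_ i
      · rw [Fin.snoc_last]; omega
      · intro j; rw [Fin.snoc_castSucc]
    case right_inv =>
      intro y hy
      funext i
      rw [Fin.snoc_castSucc]
  · intro x hx
    simp only [Finset.mem_coe, Finset.mem_filter, Fintype.mem_piFinset, Finset.mem_range] at hx
    have hsum := hx.2
    rw [Fin.sum_univ_castSucc] at hsum
    have := hx.1 (Fin.last m)
    rw [Finset.mem_coe, Finset.mem_Icc]
    beta_reduce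
    omega

lemma cnt_step : ∀ (m : ℕ) (a : Fin m → ℕ) (r : ℕ), 2 * r + 1 ≤ ∑ i, a i →
    cnt m a r ≤ cnt m a (r + 1) := by
  intro m
  induction m with
  | zero => intro a r h; simp at h
  | succ m IH =>
    intro a r h
    set b := a (Fin.last m) with hb
    set a' := fun i : Fin m => a i.castSucc with ha'
    set N' := ∑ i, a' i with hN'
    have hNN : ∑ i, a i = N' + b := by
      rw [Fin.sum_univ_castSucc]
    rw [cnt_succ, cnt_succ, ← ha', ← hb]
    -- monotone lemma from IH
    have mono : ∀ d x, 2 * (x + d) ≤ N' + 1 → cnt m a' x ≤ cnt m a' (x + d) := by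
      intro d
      induction d with
      | zero => intro x _; exact le_refl _
      | succ d ihd =>
        intro x hx
        calc cnt m a' x ≤ cnt m a' (x + d) := ihd x (by omega)
          _ ≤ cnt m a' (x + d + 1) := IH a' (x + d) (by omega)
    by_cases hrb : r < b
    · have h1 : r - b = 0 := by omega
      have h2 : r + 1 - b = 0 := by omega
      rw [h1, h2]
      rw [show Finset.Icc 0 (r + 1) = insert (r + 1) (Finset.Icc 0 r) by
        ext t; simp [Finset.mem_Icc]; omega]
      rw [Finset.sum_insert (by simp)]
      omega
    · push_neg at hrb
      have hkey : cnt m a' (r - b) ≤ cnt m a' (r + 1) := by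
        have hy : r + 1 ≤ N' := by omega
        by_cases hc : 2 * (r + 1) ≤ N' + 1
        · have := mono (b + 1) (r - b) (by omega)
          rwa [show r - b + (b + 1) = r + 1 by omega] at this
        · have hsym : cnt m a' (r + 1) = cnt m a' (N' - (r + 1)) := cnt_symm m a' (r + 1) hy
          rw [hsym]
          have := mono (N' - (r + 1) - (r - b)) (r - b) (by omega)
          rwa [show r - b + (N' - (r + 1) - (r - b)) = N' - (r + 1) by omega] at this
      have e1 : Finset.Icc (r - b) r = insert (r - b) (Finset.Icc (r - b + 1) r) := by
        ext t; simp [Finset.mem_Icc]; omega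
      have e2 : Finset.Icc (r + 1 - b) (r + 1) = insert (r + 1) (Finset.Icc (r - b + 1) r) := by
        ext t; simp [Finset.mem_Icc]; omega
      rw [e1, e2, Finset.sum_insert (by simp [Finset.mem_Icc]),
        Finset.sum_insert (by simp [Finset.mem_Icc])]
      omega

lemma cnt_le_middle (m : ℕ) (a : Fin m → ℕ) (N : ℕ) (hN : N = ∑ i, a i) (r : ℕ)
    (hr : r ≤ N) : cnt m a r ≤ cnt m a (N / 2) := by
  have mono : ∀ d x, 2 * (x + d) ≤ N + 1 → cnt m a x ≤ cnt m a (x + d) := by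
    intro d
    induction d with
    | zero => intro x _; exact le_refl _
    | succ d ihd =>
      intro x hx
      calc cnt m a x ≤ cnt m a (x + d) := ihd x (by omega)
        _ ≤ cnt m a (x + d + 1) := cnt_step m a (x + d) (by omega)
  by_cases hc : 2 * r ≤ N
  · have := mono (N / 2 - r) r (by omega)
    rwa [show r + (N / 2 - r) = N / 2 by omega] at this
  · rw [cnt_symm m a r (by omega)]
    rw [← hN]
    have := mono (N / 2 - (N - r)) (N - r) (by omega)
    rwa [show N - r + (N / 2 - (N - r)) = N / 2 by omega] at this

/-- For any `0 ≤ r ≤ N`, the number `N_m(r; a_1,...,a_m)` of ways to write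
`r = x_1 + ... + x_m` with `0 ≤ x_i ≤ a i` is at most `N_m(⌊N/2⌋; a_1,...,a_m)`,
where `N = a_1 + ... + a_m`. -/
theorem middle_maximizes (m : ℕ) (a : Fin m → ℕ) (ha : ∀ i, 0 < a i)
    (N : ℕ) (hN : N = ∑ i, a i) (r : ℕ) (hr : r ≤ N) :
    {x : Fin m → ℕ | (∀ i, x i ≤ a i) ∧ ∑ i, x i = r}.ncard ≤
      {x : Fin m → ℕ | (∀ i, x i ≤ a i) ∧ ∑ i, x i = N / 2}.ncard := by
  have hset : ∀ s : ℕ, {x : Fin m → ℕ | (∀ i, x i ≤ a i) ∧ ∑ i, x i = s} =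
      ↑((Fintype.piFinset fun i => Finset.range (a i + 1)).filter fun x => ∑ i, x i = s) := by
    intro s
    ext x
    simp [Nat.lt_succ_iff]
  rw [hset r, hset (N / 2), Set.ncard_coe_finset, Set.ncard_coe_finset]
  exact cnt_le_middle m a N hN r hr
end

section
/- Among all 2-column margins, the balanced one maximizes the number of contingency tables: for any 0 ≤ r ≤ N, the number of m×2 nonnegative integer matrices with row sums a_1,...,a_m and column sums (r, N−r) is at most the number with column sums (⌊N/2⌋, ⌈N/2⌉). -/
open Finset

private def lvl {m : ℕ} (a : Fin m → ℕ) (k : ℤ) : ℕ :=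
  ((Fintype.piFinset fun i => Finset.range (a i + 1)).filter
    fun x => (∑ i, (x i : ℤ)) = k).card

private lemma lvl_zero (a : Fin 0 → ℕ) (k : ℤ) : lvl a k = if k = 0 then 1 else 0 := by
  classical
  unfold lvl
  rw [show (Fintype.piFinset fun i : Fin 0 => Finset.range (a i + 1)) = {default} from by
    ext x; simp [eq_iff_true_of_subsingleton]]
  simp [Finset.filter_singleton, eq_comm, apply_ite Finset.card]

private lemma lvl_succ {m : ℕ} (a : Fin (m+1) → ℕ) (k : ℤ) :
    lvl a k = ∑ j ∈ Finset.range (a 0 + 1), lvl (Fin.tail a) (k - j) := by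
  classical
  unfold lvl
  rw [show ((Fintype.piFinset fun i => Finset.range (a i + 1)).filter
      fun x => (∑ i, (x i : ℤ)) = k)
    = (Finset.range (a 0 + 1)).biUnion fun j =>
        ((Fintype.piFinset fun i => Finset.range (Fin.tail a i + 1)).filter
          fun y => (∑ i, (y i : ℤ)) = k - j).image (Fin.cons j) from ?_]
  · rw [Finset.card_biUnion ?_]
    · refine Finset.sum_congr rfl fun j _ => ?_
      exact Finset.card_image_of_injective _ (@Fin.cons_right_injective m (fun _ => ℕ) j)
    · intro j hj j' hj' hne
      simp only [Finset.disjoint_left, Finset.mem_image, Finset.mem_filter]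
      rintro x ⟨y, _, rfl⟩ ⟨z, _, hz⟩
      apply hne
      have := congrFun hz 0
      simpa using this.symm
  · ext x
    simp only [Finset.mem_filter, Fintype.mem_piFinset, Finset.mem_range,
      Finset.mem_biUnion, Finset.mem_image]
    constructor
    · rintro ⟨hx, hsum⟩
      refine ⟨x 0, hx 0, Fin.tail x, ⟨fun i => hx i.succ, ?_⟩, Fin.cons_self_tail x⟩
      rw [Fin.sum_univ_succ] at hsum
      simp only [Fin.tail]
      omega
    · rintro ⟨j, hj, y, ⟨hy, hys⟩, rfl⟩
      constructor
      · intro i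
        refine Fin.cases ?_ ?_ i
        · simpa using hj
        · intro i'; simpa [Fin.tail] using hy i'
      · rw [Fin.sum_univ_succ]
        simp only [Fin.cons_zero, Fin.cons_succ]
        omega
open Finset
private lemma mono_of {f : ℤ → ℕ} {N : ℤ} (hs : ∀ k, f (N - k) = f k)
    (hm : ∀ k, 2 * k + 1 ≤ N → f k ≤ f (k + 1)) :
    ∀ k l, k ≤ l → k + l ≤ N → f k ≤ f l := by
  have aux : ∀ k l, k ≤ l → 2 * l ≤ N → f k ≤ f l := by
    intro k l hkl
    refine Int.le_induction (motive := fun l _ => 2 * l ≤ N → f k ≤ f l) ?_ ?_ l hkl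
    · intro _; exact le_refl _
    · intro n hn ih h2
      exact (ih (by omega)).trans (hm n (by omega))
  intro k l hkl hsum
  by_cases h : 2 * l ≤ N
  · exact aux k l hkl h
  · calc f k ≤ f (N - l) := aux k (N - l) (by omega) (by omega)
    _ = f l := hs l

private lemma lvl_good : ∀ (m : ℕ) (a : Fin m → ℕ),
    (∀ k, lvl a ((∑ i, (a i : ℤ)) - k) = lvl a k) ∧
    (∀ k, 2 * k + 1 ≤ (∑ i, (a i : ℤ)) → lvl a k ≤ lvl a (k + 1)) := by
  intro m
  induction m with
  | zero =>
    intro a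
    constructor
    · intro k
      rw [lvl_zero, lvl_zero]
      simp only [Finset.univ_eq_empty, Finset.sum_empty, zero_sub, neg_eq_zero]
    · intro k hk
      rw [lvl_zero, lvl_zero]
      simp only [Finset.univ_eq_empty, Finset.sum_empty] at hk
      rw [if_neg (by omega)]
      omega
  | succ n ih =>
    intro a
    obtain ⟨hs, hm⟩ := ih (Fin.tail a)
    set Nt : ℤ := ∑ i, ((Fin.tail a) i : ℤ) with hNt
    have hmono := mono_of hs hm
    have hNdec : (∑ i, (a i : ℤ)) = (a 0 : ℤ) + Nt := by
      rw [Fin.sum_univ_succ]; rfl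
    set A : ℕ := a 0 with hA
    constructor
    · intro k
      rw [lvl_succ, lvl_succ, hNdec]
      have h1 : ∀ j ∈ Finset.range (A + 1),
          lvl (Fin.tail a) ((A : ℤ) + Nt - k - j) = lvl (Fin.tail a) (k - (A : ℤ) + j) := by
        intro j _
        rw [show (A : ℤ) + Nt - k - j = Nt - (k - A + j) by ring, hs]
      rw [Finset.sum_congr rfl h1]
      have h2 : ∀ j ∈ Finset.range (A + 1),
          lvl (Fin.tail a) (k - (j : ℤ)) = (fun i : ℕ => lvl (Fin.tail a) (k - (A : ℤ) + i)) (A - j) := by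
        intro j hj
        simp only [Finset.mem_range] at hj
        have : ((A - j : ℕ) : ℤ) = (A : ℤ) - j := by omega
        simp only [this]
        ring_nf
      rw [Finset.sum_congr rfl h2]
      have := Finset.sum_range_reflect (fun i : ℕ => lvl (Fin.tail a) (k - (A : ℤ) + i)) (A + 1)
      simp only [Nat.add_sub_cancel] at this
      simpa using this.symm
    · intro k hk
      rw [lvl_succ, lvl_succ]
      have e1 : ∑ j ∈ Finset.range (A + 1), lvl (Fin.tail a) (k + 1 - j)
          = (∑ i ∈ Finset.range A, lvl (Fin.tail a) (k - i)) + lvl (Fin.tail a) (k + 1) := by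
        rw [Finset.sum_range_succ' (fun j : ℕ => lvl (Fin.tail a) (k + 1 - j)) A]
        congr 1
        · refine Finset.sum_congr rfl fun i _ => ?_
          congr 1; push_cast; ring
        · congr 1; push_cast; ring
      have e2 : ∑ j ∈ Finset.range (A + 1), lvl (Fin.tail a) (k - j)
          = (∑ i ∈ Finset.range A, lvl (Fin.tail a) (k - i)) + lvl (Fin.tail a) (k - A) := by
        rw [Finset.sum_range_succ]
      rw [e1, e2]
      have : lvl (Fin.tail a) (k - A) ≤ lvl (Fin.tail a) (k + 1) := by
        apply hmono <;> rw [hNdec] at hk <;> omega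
      omega

private lemma ncard_eq_lvl (m : ℕ) (a : Fin m → ℕ) (N : ℕ) (hN : N = ∑ i, a i)
    (s : ℕ) :
    {M : Fin m → Fin 2 → ℕ | (∀ i, M i 0 + M i 1 = a i) ∧
        (∑ i, M i 0 = s) ∧ (∑ i, M i 1 = N - s)}.ncard = lvl a s := by
  classical
  set S : Set (Fin m → Fin 2 → ℕ) := {M | (∀ i, M i 0 + M i 1 = a i) ∧
        (∑ i, M i 0 = s) ∧ (∑ i, M i 1 = N - s)} with hS
  set T : Finset (Fin m → ℕ) := (Fintype.piFinset fun i => Finset.range (a i + 1)).filter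
    fun x => (∑ i, (x i : ℤ)) = s with hT
  set F : (Fin m → Fin 2 → ℕ) → (Fin m → ℕ) := fun M i => M i 0 with hF
  have hinj : Set.InjOn F S := by
    intro M hM M' hM' hFM
    funext i j
    have h1 := hM.1 i
    have h1' := hM'.1 i
    have h0 : M i 0 = M' i 0 := congrFun hFM i
    fin_cases j
    · exact h0
    · show M i 1 = M' i 1
      omega
  have himg : F '' S = ↑T := by
    ext x
    simp only [Set.mem_image, hS, Set.mem_setOf_eq, Finset.coe_filter, hT,
      Fintype.mem_piFinset, Finset.mem_range]
    constructor
    · rintro ⟨M, ⟨h1, h2, h3⟩, rfl⟩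
      refine ⟨fun i => by have := h1 i; simp only [hF]; omega, ?_⟩
      simp only [hF]
      push_cast [← h2]
      rfl
    · rintro ⟨hx1, hx2⟩
      have hx2' : ∑ i, x i = s := by exact_mod_cast hx2
      refine ⟨fun i => ![x i, a i - x i], ⟨fun i => ?_, ?_, ?_⟩, ?_⟩
      · have := hx1 i; simp; omega
      · simpa using hx2'
      · have hsum : ∑ i, (x i + (a i - x i)) = ∑ i, a i := by
          refine Finset.sum_congr rfl fun i _ => ?_
          have := hx1 i; omega
        rw [Finset.sum_add_distrib] at hsum
        simp only [Matrix.cons_val_one, Matrix.head_cons, Matrix.cons_val_zero]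
        omega
      · funext i; simp [hF]
  have : S.ncard = (F '' S).ncard := (Set.ncard_image_of_injOn hinj).symm
  rw [this, himg, Set.ncard_coe_finset]
  rfl

/-- Among all 2-column margins, the balanced one maximizes the number of contingency
tables: for any `0 ≤ r ≤ N`, the number of `m × 2` nonnegative integer matrices with
row sums `a_1,...,a_m` and column sums `(r, N - r)` is at most the number with column
sums `(⌊N/2⌋, ⌈N/2⌉)`. -/
theorem balanced_two_column_maximizes (m : ℕ) (a : Fin m → ℕ) (ha : ∀ i, 0 < a i)
    (N : ℕ) (hN : N = ∑ i, a i) (r : ℕ) (hr : r ≤ N) :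
    {M : Fin m → Fin 2 → ℕ | (∀ i, M i 0 + M i 1 = a i) ∧
        (∑ i, M i 0 = r) ∧ (∑ i, M i 1 = N - r)}.ncard ≤
      {M : Fin m → Fin 2 → ℕ | (∀ i, M i 0 + M i 1 = a i) ∧
        (∑ i, M i 0 = N / 2) ∧ (∑ i, M i 1 = N - N / 2)}.ncard := by
  classical
  rw [ncard_eq_lvl m a N hN r, ncard_eq_lvl m a N hN (N / 2)]
  obtain ⟨hs, hm⟩ := lvl_good m a
  have hNZ : (∑ i, (a i : ℤ)) = (N : ℤ) := by rw [hN]; push_cast; rfl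
  rw [hNZ] at hs hm
  have hmono := mono_of hs hm
  by_cases h2 : 2 * r ≤ N
  · exact hmono (r : ℤ) ((N / 2 : ℕ) : ℤ) (by omega) (by omega)
  · have hsym : lvl a r = lvl a ((N - r : ℕ) : ℤ) := by
      rw [show ((N - r : ℕ) : ℤ) = (N : ℤ) - r by omega, hs]
    rw [hsym]
    exact hmono ((N - r : ℕ) : ℤ) ((N / 2 : ℕ) : ℤ) (by omega) (by omega)
end

section
/- For fixed x ≥ 0, the probability that the first coordinate of a uniform nonnegative-integer composition of Cn into n parts equals x converges, as n → ∞, to (1/(1+C))·(C/(1+C))^x, i.e. the Geometric(C) density. -/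
open Filter

/-- The limit of `(a*n + b)/(c*n + d)` is `a/c` when `c ≠ 0`. -/
lemma aux_lin (a b c d : ℝ) (hc : c ≠ 0) :
    Tendsto (fun n : ℕ => (a * n + b) / (c * n + d)) atTop (nhds (a / c)) := by
  have hb : Tendsto (fun n : ℕ => a + b * (1 / (n : ℝ))) atTop (nhds a) := by
    simpa using tendsto_const_nhds.add (tendsto_one_div_atTop_nhds_zero_nat.const_mul b)
  have hd : Tendsto (fun n : ℕ => c + d * (1 / (n : ℝ))) atTop (nhds c) := by
    simpa using tendsto_const_nhds.add (tendsto_one_div_atTop_nhds_zero_nat.const_mul d)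
  refine (hb.div hd hc).congr' ?_
  filter_upwards [eventually_gt_atTop 0] with n hn
  have hn' : (n : ℝ) ≠ 0 := Nat.cast_ne_zero.mpr hn.ne'
  have h1 : a * n + b = (a + b * (1 / (n : ℝ))) * n := by field_simp
  have h2 : c * n + d = (c + d * (1 / (n : ℝ))) * n := by field_simp
  show (a + b * (1 / (n : ℝ))) / (c + d * (1 / (n : ℝ))) = _
  rw [h1, h2, mul_div_mul_right _ _ hn']

/-- For fixed `x ≥ 0`, the probability
`p_n(x) = C(Cn - x + n - 2, n - 2) / C(Cn + n - 1, n - 1)` that the first coordinate of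
a uniform nonnegative-integer composition of `Cn` into `n` parts equals `x` converges,
as `n → ∞`, to the Geometric(C) density `(1/(1+C)) (C/(1+C))^x`. -/
theorem marginal_tendsto_geometric (C : ℕ) (hC : 2 ≤ C) (x : ℕ) :
    Tendsto (fun n : ℕ =>
        ((Nat.choose (C * n - x + n - 2) (n - 2) : ℝ) /
          (Nat.choose (C * n + n - 1) (n - 1) : ℝ)))
      atTop (nhds ((1 / (1 + (C : ℝ))) * ((C : ℝ) / (1 + (C : ℝ))) ^ x)) := by
  have hC1 : ((C : ℝ) + 1) ≠ 0 := by positivity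
  have hC2 : (2 : ℝ) ≤ (C : ℝ) := by exact_mod_cast hC
  induction x with
  | zero =>
    simp only [pow_zero, mul_one]
    have lim := aux_lin 1 (-1) ((C : ℝ) + 1) (-1) hC1
    rw [show (1 : ℝ) / ((C : ℝ) + 1) = 1 / (1 + (C : ℝ)) by rw [add_comm]] at lim
    refine lim.congr' ?_
    filter_upwards [eventually_ge_atTop 2] with n hn
    have hmul : 2 * n ≤ C * n := Nat.mul_le_mul_right n hC
    have h1 : n - 2 + 1 = n - 1 := by omega
    have h2 : C * n + n - 2 + 1 = C * n + n - 1 := by omega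
    have key := Nat.add_one_mul_choose_eq (C * n + n - 2) (n - 2)
    rw [h1, h2] at key
    have hn2 : (2 : ℝ) ≤ (n : ℝ) := by exact_mod_cast hn
    have hB : (0 : ℝ) < ((C * n + n - 1).choose (n - 1) : ℝ) := by
      exact_mod_cast Nat.choose_pos (by omega : n - 1 ≤ C * n + n - 1)
    have hc1 : ((C * n + n - 1 : ℕ) : ℝ) = (C : ℝ) * n + n - 1 := by
      have h : (C * n + n - 1) + 1 = C * n + n := by omega
      have := congrArg (Nat.cast : ℕ → ℝ) h
      push_cast at this
      linarith
    have hn1 : ((n - 1 : ℕ) : ℝ) = (n : ℝ) - 1 := by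
      have h : (n - 1) + 1 = n := by omega
      have := congrArg (Nat.cast : ℕ → ℝ) h
      push_cast at this
      linarith
    have hcast := congrArg (Nat.cast : ℕ → ℝ) key
    rw [Nat.cast_mul, Nat.cast_mul, hc1, hn1] at hcast
    have hidx : C * n - 0 + n - 2 = C * n + n - 2 := by omega
    rw [hidx]
    have hld : ((C : ℝ) + 1) * n + (-1) ≠ 0 := by nlinarith
    rw [div_eq_div_iff hld hB.ne']
    linear_combination -hcast
  | succ x ih =>
    have hlim2 := aux_lin (C : ℝ) (-(x : ℝ)) ((C : ℝ) + 1) (-(x : ℝ) - 2) hC1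
    have hval : (1 / (1 + (C : ℝ))) * ((C : ℝ) / (1 + (C : ℝ))) ^ (x + 1) =
        ((1 / (1 + (C : ℝ))) * ((C : ℝ) / (1 + (C : ℝ))) ^ x) * ((C : ℝ) / ((C : ℝ) + 1)) := by
      rw [pow_succ, add_comm (1 : ℝ)]
      ring
    rw [hval]
    refine (ih.mul hlim2).congr' ?_
    filter_upwards [eventually_ge_atTop (x + 3)] with n hn
    have hmul : 2 * n ≤ C * n := Nat.mul_le_mul_right n hC
    set a := C * n - x + n - 2 with ha
    have hidx : C * n - (x + 1) + n - 2 = a - 1 := by omega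
    simp only [hidx]
    have key := Nat.choose_mul_succ_eq (a - 1) (n - 2)
    have h1 : a - 1 + 1 = a := by omega
    have h2 : a - 1 + 1 - (n - 2) = C * n - x := by omega
    rw [h2, h1] at key
    have hB : (0 : ℝ) < ((C * n + n - 1).choose (n - 1) : ℝ) := by
      exact_mod_cast Nat.choose_pos (by omega : n - 1 ≤ C * n + n - 1)
    have hn3 : ((x : ℝ) + 3) ≤ (n : ℝ) := by exact_mod_cast hn
    have hacast : ((a : ℕ) : ℝ) = ((C : ℝ) + 1) * n + (-(x : ℝ) - 2) := by
      have h : a + (x + 2) = C * n + n := by omega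
      have := congrArg (Nat.cast : ℕ → ℝ) h
      push_cast at this
      linarith
    have hpcast : ((C * n - x : ℕ) : ℝ) = (C : ℝ) * n + (-(x : ℝ)) := by
      have h : (C * n - x) + x = C * n := by omega
      have := congrArg (Nat.cast : ℕ → ℝ) h
      push_cast at this
      linarith
    have hcast := congrArg (Nat.cast : ℕ → ℝ) key
    rw [Nat.cast_mul, Nat.cast_mul, hacast, hpcast] at hcast
    have hQ : ((C : ℝ) + 1) * n + (-(x : ℝ) - 2) ≠ 0 := by nlinarith
    rw [div_mul_div_comm, div_eq_div_iff (mul_ne_zero hB.ne' hQ) hB.ne']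
    linear_combination (-(((C * n + n - 1).choose (n - 1) : ℕ) : ℝ)) * hcast
end

section
/- Let Y_1,...,Y_{n²} be i.i.d. Geometric with mean C and λ = log((1+C)/C). Then (1/λ)H_{n²} − 1 < E[max_{1≤i≤n²} Y_i] < (1/λ)H_{n²}, where H_m = ∑_{k=1}^m 1/k. -/
open MeasureTheory Finset Set Filter Topology
open scoped ENNReal

namespace GeoMaxAux

noncomputable def f (l : ℝ) (N : ℕ) (t : ℝ) : ℝ := 1 - (1 - Real.exp (-(l*t)))^N

lemma f_eq (l : ℝ) (N : ℕ) (t : ℝ) :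
    f l N t = Real.exp (-(l*t)) * ∑ i ∈ range N, (1 - Real.exp (-(l*t)))^i := by
  have h := geom_sum_mul (1 - Real.exp (-(l*t))) N
  unfold f
  nlinarith [h]

variable {l : ℝ} {N : ℕ}

lemma e_pos (l t : ℝ) : 0 < Real.exp (-(l*t)) := Real.exp_pos _

lemma e_le_one (hl : 0 < l) {t : ℝ} (ht : 0 ≤ t) : Real.exp (-(l*t)) ≤ 1 := by
  rw [Real.exp_le_one_iff]
  nlinarith

lemma e_lt_one (hl : 0 < l) {t : ℝ} (ht : 0 < t) : Real.exp (-(l*t)) < 1 := by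
  rw [Real.exp_lt_one_iff]
  nlinarith

lemma base_nonneg (hl : 0 < l) {t : ℝ} (ht : 0 ≤ t) : 0 ≤ 1 - Real.exp (-(l*t)) := by
  linarith [e_le_one hl ht]

lemma f_nonneg (hl : 0 < l) {t : ℝ} (ht : 0 ≤ t) : 0 ≤ f l N t := by
  rw [f_eq]
  refine mul_nonneg (Real.exp_nonneg _) (Finset.sum_nonneg fun i _ => ?_)
  exact pow_nonneg (base_nonneg hl ht) i

lemma f_le (hl : 0 < l) {t : ℝ} (ht : 0 ≤ t) : f l N t ≤ N * Real.exp (-(l*t)) := by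
  rw [f_eq, mul_comm]
  refine mul_le_mul_of_nonneg_right ?_ (Real.exp_nonneg _)
  calc ∑ i ∈ range N, (1 - Real.exp (-(l*t)))^i ≤ ∑ i ∈ range N, 1 := by
        refine Finset.sum_le_sum fun i _ => ?_
        exact pow_le_one₀ (base_nonneg hl ht) (by linarith [e_pos l t])
    _ = N := by simp

lemma f_anti (hl : 0 < l) {s t : ℝ} (hs : 0 ≤ s) (hst : s ≤ t) : f l N t ≤ f l N s := by
  unfold f
  have h1 : Real.exp (-(l*t)) ≤ Real.exp (-(l*s)) := by
    apply Real.exp_le_exp.2; nlinarith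
  have := pow_le_pow_left₀ (base_nonneg hl hs) (by linarith : 1 - Real.exp (-(l*s)) ≤ 1 - Real.exp (-(l*t))) N
  linarith

lemma f_strict (hl : 0 < l) (hN : N ≠ 0) {s t : ℝ} (hs : 0 ≤ s) (hst : s < t) :
    f l N t < f l N s := by
  unfold f
  have h1 : Real.exp (-(l*t)) < Real.exp (-(l*s)) := by
    apply Real.exp_lt_exp.2; nlinarith
  have := pow_lt_pow_left₀ (by linarith : 1 - Real.exp (-(l*s)) < 1 - Real.exp (-(l*t)))
    (base_nonneg hl hs) hN
  linarith

lemma f_cont (l : ℝ) (N : ℕ) : Continuous (f l N) := by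
  unfold f; fun_prop

lemma f_zero (hN : N ≠ 0) : f l N 0 = 1 := by
  unfold f
  simp [Real.exp_zero, zero_pow hN]

lemma exp_integrable (hl : 0 < l) (a : ℝ) :
    IntegrableOn (fun t => Real.exp (-(l*t))) (Ioi a) := by
  have := exp_neg_integrableOn_Ioi a hl
  refine this.congr_fun (fun x _ => by ring_nf) measurableSet_Ioi

lemma f_integrable (hl : 0 < l) : IntegrableOn (f l N) (Ioi 0) := by
  refine Integrable.mono' (((exp_integrable hl 0).const_mul (N:ℝ))) ((f_cont l N).aestronglyMeasurable) ?_
  filter_upwards [ae_restrict_mem measurableSet_Ioi] with t ht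
  rw [Real.norm_eq_abs, abs_of_nonneg (f_nonneg hl (le_of_lt ht))]
  exact f_le hl (le_of_lt ht)

lemma hi_integrable (hl : 0 < l) (i : ℕ) :
    IntegrableOn (fun t => Real.exp (-(l*t)) * (1 - Real.exp (-(l*t)))^i) (Ioi 0) := by
  refine Integrable.mono' (exp_integrable hl 0)
    ((by fun_prop : Continuous fun t => Real.exp (-(l*t)) * (1 - Real.exp (-(l*t)))^i).aestronglyMeasurable) ?_
  filter_upwards [ae_restrict_mem measurableSet_Ioi] with t ht
  rw [Real.norm_eq_abs, abs_of_nonneg (mul_nonneg (Real.exp_nonneg _)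
    (pow_nonneg (base_nonneg hl ht.le) i))]
  calc Real.exp (-(l*t)) * (1 - Real.exp (-(l*t)))^i
      ≤ Real.exp (-(l*t)) * 1 := by
        gcongr
        exact pow_le_one₀ (base_nonneg hl ht.le) (by linarith [e_pos l t])
    _ = Real.exp (-(l*t)) := mul_one _

lemma hi_integral (hl : 0 < l) (i : ℕ) :
    ∫ t in Ioi (0:ℝ), Real.exp (-(l*t)) * (1 - Real.exp (-(l*t)))^i = 1 / (l*(i+1)) := by
  have hd : ∀ t ∈ Ici (0:ℝ), HasDerivAt (fun t => (1 - Real.exp (-(l*t)))^(i+1) / (l*(i+1)))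
      (Real.exp (-(l*t)) * (1 - Real.exp (-(l*t)))^i) t := by
    intro t _
    have h1 : HasDerivAt (fun t : ℝ => -(l*t)) (-l) t := by
      have h := ((hasDerivAt_id' t).const_mul l).neg
      simp only [mul_one] at h
      exact h
    have h2 : HasDerivAt (fun t : ℝ => Real.exp (-(l*t))) (Real.exp (-(l*t)) * (-l)) t :=
      h1.exp
    have h3 : HasDerivAt (fun t : ℝ => 1 - Real.exp (-(l*t))) (l * Real.exp (-(l*t))) t := by
      simpa [mul_comm] using h2.const_sub 1
    have h4 := (h3.pow (i+1)).div_const (l*(i+1))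
    refine h4.congr_deriv ?_
    rw [Nat.add_sub_cancel]
    push_cast
    have hip : ((i:ℝ)+1) ≠ 0 := by positivity
    have hl0 : l ≠ 0 := hl.ne'
    field_simp
  have htend : Tendsto (fun t => (1 - Real.exp (-(l*t)))^(i+1) / (l*(i+1))) atTop
      (𝓝 (1 / (l*(i+1)))) := by
    have h0 : Tendsto (fun t : ℝ => Real.exp (-(l*t))) atTop (𝓝 0) := by
      apply Real.tendsto_exp_atBot.comp
      have := Tendsto.const_mul_atTop_of_neg (by linarith : -l < 0) (tendsto_id (α := ℝ))
      refine Tendsto.congr (fun x => ?_) this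
      simp [neg_mul]
    have := ((h0.const_sub 1).pow (i+1)).div_const (l*(i+1))
    simpa using this
  have := integral_Ioi_of_hasDerivAt_of_tendsto' hd (hi_integrable hl i) htend
  rw [this]
  simp [Real.exp_zero]

lemma integral_f (hl : 0 < l) :
    ∫ t in Ioi (0:ℝ), f l N t = (1/l) * ∑ k ∈ range N, (1:ℝ)/(k+1) := by
  have h1 : ∫ t in Ioi (0:ℝ), f l N t
      = ∑ i ∈ range N, ∫ t in Ioi (0:ℝ), Real.exp (-(l*t)) * (1 - Real.exp (-(l*t)))^i := by
    rw [← integral_finset_sum _ (fun i _ => hi_integrable hl i)]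
    refine setIntegral_congr_fun measurableSet_Ioi fun t _ => ?_
    rw [f_eq, Finset.mul_sum]
  rw [h1, Finset.mul_sum]
  refine Finset.sum_congr rfl fun i _ => ?_
  rw [hi_integral hl i]
  field_simp

lemma summable_f (hl : 0 < l) : Summable (fun k : ℕ => f l N (k+1)) := by
  have hgeom : Summable (fun k : ℕ => (N:ℝ) * (Real.exp (-l))^(k+1)) := by
    apply Summable.mul_left
    have he1 : Real.exp (-l) < 1 := by rw [Real.exp_lt_one_iff]; linarith
    exact ((summable_geometric_of_lt_one (Real.exp_nonneg _) he1).mul_left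
      (Real.exp (-l))).congr (fun k => by rw [pow_succ]; ring)
  refine Summable.of_nonneg_of_le (fun k => f_nonneg hl (by positivity)) (fun k => ?_) hgeom
  have := f_le (N := N) hl (t := (k:ℝ)+1) (by positivity)
  calc f l N (k+1) ≤ N * Real.exp (-(l*((k:ℝ)+1))) := this
    _ = (N:ℝ) * (Real.exp (-l))^(k+1) := by
        rw [← Real.exp_nat_mul]
        push_cast
        ring_nf


lemma J_ge (hl : 0 < l) (k : ℕ) : f l N (k+1) ≤ ∫ t in (k:ℝ)..((k:ℝ)+1), f l N t := by
  have h : ∫ t in (k:ℝ)..((k:ℝ)+1), f l N ((k:ℝ)+1) ≤ ∫ t in (k:ℝ)..((k:ℝ)+1), f l N t := by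
    refine intervalIntegral.integral_mono_on (by linarith) (intervalIntegrable_const)
      ((f_cont l N).intervalIntegrable _ _) (fun x hx => ?_)
    exact f_anti hl (le_trans (Nat.cast_nonneg k) hx.1) hx.2
  simpa using h

lemma J_le (hl : 0 < l) (k : ℕ) : ∫ t in (k:ℝ)..((k:ℝ)+1), f l N t ≤ f l N k := by
  have h : ∫ t in (k:ℝ)..((k:ℝ)+1), f l N t ≤ ∫ t in (k:ℝ)..((k:ℝ)+1), f l N k := by
    refine intervalIntegral.integral_mono_on (by linarith)
      ((f_cont l N).intervalIntegrable _ _) (intervalIntegrable_const) (fun x hx => ?_)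
    exact f_anti hl (Nat.cast_nonneg k) hx.1
  simpa using h

lemma half_le (hl : 0 < l) {a b : ℝ} (hab : a ≤ b) (ha : 0 ≤ a) :
    ∫ t in a..b, f l N t ≤ (b - a) * f l N a := by
  have h : ∫ t in a..b, f l N t ≤ ∫ t in a..b, f l N a :=
    intervalIntegral.integral_mono_on hab ((f_cont l N).intervalIntegrable _ _)
      (intervalIntegrable_const) (fun x hx => f_anti hl ha hx.1)
  simpa [smul_eq_mul] using h

lemma half_ge (hl : 0 < l) {a b : ℝ} (hab : a ≤ b) (ha : 0 ≤ a) :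
    (b - a) * f l N b ≤ ∫ t in a..b, f l N t := by
  have h : ∫ t in a..b, f l N b ≤ ∫ t in a..b, f l N t :=
    intervalIntegral.integral_mono_on hab (intervalIntegrable_const)
      ((f_cont l N).intervalIntegrable _ _)
      (fun x hx => f_anti hl (le_trans ha hx.1) hx.2)
  simpa [smul_eq_mul] using h

lemma J0_split : ∫ t in (0:ℝ)..1, f l N t
    = (∫ t in (0:ℝ)..(1/2:ℝ), f l N t) + ∫ t in (1/2:ℝ)..1, f l N t :=
  (intervalIntegral.integral_add_adjacent_intervals ((f_cont l N).intervalIntegrable _ _)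
    ((f_cont l N).intervalIntegrable _ _)).symm

lemma J0_gt (hl : 0 < l) (hN : N ≠ 0) : f l N 1 < ∫ t in (0:ℝ)..1, f l N t := by
  rw [J0_split]
  have h1 := half_ge (N := N) hl (by norm_num : (0:ℝ) ≤ 1/2) le_rfl
  have h2 := half_ge (N := N) hl (by norm_num : (1/2:ℝ) ≤ 1) (by norm_num)
  have h3 : f l N 1 < f l N (1/2) := f_strict hl hN (by norm_num) (by norm_num)
  have e1 : ((1:ℝ)/2 - 0) = 1/2 := by norm_num
  have e2 : ((1:ℝ) - 1/2) = 1/2 := by norm_num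
  rw [e1] at h1; rw [e2] at h2
  linarith

lemma J0_lt (hl : 0 < l) (hN : N ≠ 0) : ∫ t in (0:ℝ)..1, f l N t < f l N 0 := by
  rw [J0_split]
  have h1 := half_le (N := N) hl (by norm_num : (0:ℝ) ≤ 1/2) le_rfl
  have h2 := half_le (N := N) hl (by norm_num : (1/2:ℝ) ≤ 1) (by norm_num)
  have h3 : f l N (1/2) < f l N 0 := f_strict hl hN le_rfl (by norm_num)
  have e1 : ((1:ℝ)/2 - 0) = 1/2 := by norm_num
  have e2 : ((1:ℝ) - 1/2) = 1/2 := by norm_num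
  rw [e1] at h1; rw [e2] at h2
  linarith

lemma sum_J (K : ℕ) :
    ∑ k ∈ range K, ∫ t in (k:ℝ)..((k:ℝ)+1), f l N t = ∫ t in (0:ℝ)..(K:ℝ), f l N t := by
  have := intervalIntegral.sum_integral_adjacent_intervals (a := fun k : ℕ => (k:ℝ)) (n := K)
    (f := f l N) (μ := volume) (fun k _ => (f_cont l N).intervalIntegrable _ _)
  simp only [Nat.cast_succ] at this
  simpa using this

lemma interval_le_I (hl : 0 < l) (K : ℕ) :
    ∫ t in (0:ℝ)..(K:ℝ), f l N t ≤ ∫ t in Ioi (0:ℝ), f l N t := by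
  rw [intervalIntegral.integral_of_le (Nat.cast_nonneg K)]
  refine setIntegral_mono_set (f_integrable hl) ?_ (HasSubset.Subset.eventuallyLE Ioc_subset_Ioi_self)
  filter_upwards [ae_restrict_mem measurableSet_Ioi] with t ht
  exact f_nonneg hl ht.le

theorem tsum_lt_integral (hl : 0 < l) (hN : N ≠ 0) :
    ∑' k : ℕ, f l N ((k:ℝ)+1) < ∫ t in Ioi (0:ℝ), f l N t := by
  set I := ∫ t in Ioi (0:ℝ), f l N t with hI
  set δ := (∫ t in (0:ℝ)..1, f l N t) - f l N 1 with hδ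
  have hδpos : 0 < δ := by have := J0_gt (N := N) hl hN; simp [hδ]; linarith
  have key : ∀ s : Finset ℕ, ∑ k ∈ s, f l N ((k:ℝ)+1) ≤ I - δ := by
    intro s
    obtain ⟨K, hK⟩ := s.exists_nat_subset_range
    have h1 : ∑ k ∈ s, f l N ((k:ℝ)+1) ≤ ∑ k ∈ range (K+1), f l N ((k:ℝ)+1) := by
      refine Finset.sum_le_sum_of_subset_of_nonneg
        (hK.trans (Finset.range_subset_range.2 (Nat.le_succ K))) (fun k _ _ => ?_)
      exact f_nonneg hl (by positivity)
    have h2 : ∑ k ∈ range (K+1), f l N ((k:ℝ)+1) + δ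
        ≤ ∑ k ∈ range (K+1), ∫ t in (k:ℝ)..((k:ℝ)+1), f l N t := by
      rw [Finset.sum_range_succ' (fun k => f l N ((k:ℝ)+1)),
        Finset.sum_range_succ' (fun k => ∫ t in (k:ℝ)..((k:ℝ)+1), f l N t)]
      have hterm : ∀ k ∈ range K, f l N (((k:ℝ)+1)+1)
          ≤ ∫ t in ((k:ℝ)+1)..(((k:ℝ)+1)+1), f l N t := by
        intro k _
        have := J_ge (N := N) hl (k+1)
        push_cast at this ⊢
        convert this using 2 <;> push_cast <;> ring
      have := Finset.sum_le_sum hterm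
      simp only [Nat.cast_add, Nat.cast_one] at this ⊢
      have hJ0 : f l N ((0:ℝ)+1) + δ = ∫ t in (0:ℝ)..((0:ℝ)+1), f l N t := by
        simp [hδ]
      push_cast at this ⊢
      linarith [this]
    have h3 : ∑ k ∈ range (K+1), ∫ t in (k:ℝ)..((k:ℝ)+1), f l N t ≤ I := by
      rw [sum_J]
      exact interval_le_I hl (K+1) |>.trans_eq rfl |>.trans (le_of_eq rfl) |>.trans (le_refl I)
    linarith
  have hS : ∑' k : ℕ, f l N ((k:ℝ)+1) ≤ I - δ := Summable.tsum_le_of_sum_le (by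
      have := summable_f (N := N) hl
      refine this.congr (fun k => ?_)
      push_cast
      ring_nf) key
  linarith

theorem integral_lt_tsum (hl : 0 < l) (hN : N ≠ 0) :
    ∫ t in Ioi (0:ℝ), f l N t < 1 + ∑' k : ℕ, f l N ((k:ℝ)+1) := by
  set I := ∫ t in Ioi (0:ℝ), f l N t with hI
  set S := ∑' k : ℕ, f l N ((k:ℝ)+1) with hS
  set δ := f l N 0 - ∫ t in (0:ℝ)..1, f l N t with hδ
  have hδpos : 0 < δ := by have := J0_lt (N := N) hl hN; simp [hδ]; linarith
  have hsum : Summable (fun k : ℕ => f l N ((k:ℝ)+1)) := by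
    refine (summable_f (N := N) hl).congr (fun k => ?_)
    push_cast; ring_nf
  have key : ∀ K : ℕ, ∫ t in (0:ℝ)..((K:ℝ)+1), f l N t ≤ 1 + S - δ := by
    intro K
    have hcast : ((K:ℝ)+1) = ((K+1 : ℕ):ℝ) := by push_cast; ring
    rw [hcast, ← sum_J (K+1),
      Finset.sum_range_succ' (fun k => ∫ t in (k:ℝ)..((k:ℝ)+1), f l N t)]
    have hterm : ∀ k ∈ range K, (∫ t in ((k:ℝ)+1)..(((k:ℝ)+1)+1), f l N t)
        ≤ f l N ((k:ℝ)+1) := by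
      intro k _
      have := J_le (N := N) hl (k+1)
      push_cast at this ⊢
      convert this using 2 <;> push_cast <;> ring
    have h1 := Finset.sum_le_sum hterm
    have h2 : ∑ k ∈ range K, f l N ((k:ℝ)+1) ≤ S := by
      exact Summable.sum_le_tsum _ (fun k _ => f_nonneg hl (by positivity)) hsum
    have h3 : (∫ t in ((0:ℕ):ℝ)..(((0:ℕ):ℝ)+1), f l N t) = f l N 0 - δ := by
      simp [hδ]
    have hf0 : f l N 0 = 1 := f_zero hN
    push_cast at h1 h3 ⊢
    linarith
  have htend : Tendsto (fun K : ℕ => ∫ t in (0:ℝ)..((K:ℝ)+1), f l N t) atTop (𝓝 I) := by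
    refine intervalIntegral_tendsto_integral_Ioi 0 (f_integrable hl) ?_
    exact tendsto_atTop_add_const_right _ 1 tendsto_natCast_atTop_atTop
  have := le_of_tendsto htend (Filter.Eventually.of_forall key)
  linarith

end GeoMaxAux


open ProbabilityTheory in
/-- Let `Y_1,...,Y_{n²}` be i.i.d. Geometric with mean `C` and `λ = log((1+C)/C)`. Then
`(1/λ) H_{n²} - 1 < E[max_i Y_i] < (1/λ) H_{n²}`, where `H_m = ∑_{k=1}^m 1/k`. -/
theorem expected_max_of_iid_geometric {Ω : Type*} [MeasurableSpace Ω] (μ : Measure Ω)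
    [IsProbabilityMeasure μ] (C n : ℕ) (hC : 2 ≤ C) (hn : 0 < n)
    (Y : Fin (n ^ 2) → Ω → ℕ)
    (hmeas : ∀ i, Measurable (Y i))
    (hind : iIndepFun Y μ)
    (hY : ∀ i, ∀ x : ℕ, μ {ω | Y i ω = x} =
      ENNReal.ofReal ((1 / (1 + (C : ℝ))) * ((C : ℝ) / (1 + (C : ℝ))) ^ x)) :
    (1 / Real.log ((1 + (C : ℝ)) / (C : ℝ))) * (∑ k ∈ Finset.range (n ^ 2), (1 : ℝ) / (k + 1))
        - 1 < ∫ ω, ((Finset.univ.sup fun i => Y i ω : ℕ) : ℝ) ∂μ ∧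
      ∫ ω, ((Finset.univ.sup fun i => Y i ω : ℕ) : ℝ) ∂μ <
        (1 / Real.log ((1 + (C : ℝ)) / (C : ℝ))) *
          (∑ k ∈ Finset.range (n ^ 2), (1 : ℝ) / (k + 1)) := by
  classical
  have hN : n ^ 2 ≠ 0 := by positivity
  have hNfin : Nonempty (Fin (n ^ 2)) := Fin.pos_iff_nonempty.1 (Nat.pos_of_ne_zero hN)
  have hC0 : (0:ℝ) < C := by exact_mod_cast lt_of_lt_of_le (by norm_num) hC
  have hC1 : (0:ℝ) < 1 + C := by linarith
  set q : ℝ := (C:ℝ) / (1 + (C:ℝ)) with hqdef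
  have hq0 : 0 < q := by positivity
  have hq1 : q < 1 := (div_lt_one hC1).2 (by linarith)
  set l : ℝ := Real.log ((1 + (C:ℝ)) / (C:ℝ)) with hldef
  have hlpos : 0 < l := Real.log_pos ((one_lt_div hC0).2 (by linarith))
  have hexp : Real.exp (-l) = q := by
    rw [hldef, ← Real.log_inv, Real.exp_log (by positivity)]
    rw [hqdef]; field_simp
  have hqpow : ∀ m : ℕ, Real.exp (-(l * (m:ℝ))) = q ^ m := by
    intro m
    rw [show -(l * (m:ℝ)) = (m:ℝ) * (-l) by ring, Real.exp_nat_mul, hexp]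
  have hqple1 : ∀ m : ℕ, q ^ m ≤ 1 := fun m => pow_le_one₀ hq0.le hq1.le
  set M : Ω → ℕ := fun ω => Finset.univ.sup fun i => Y i ω with hMdef
  have hMmeas : Measurable M := by
    have hne : (Finset.univ : Finset (Fin (n ^ 2))).Nonempty := Finset.univ_nonempty
    have h := Finset.measurable_sup' hne (fun i _ => hmeas i)
    have heq : (Finset.univ.sup' hne Y) = M := by
      funext ω
      show Finset.univ.sup' hne Y ω = Finset.univ.sup fun i => Y i ω
      rw [← Finset.sup'_eq_sup hne]
      exact Finset.sup'_apply hne Y ω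
    rwa [heq] at h
  -- CDF of each Y i
  have hYIic : ∀ i (k : ℕ), μ (Y i ⁻¹' Set.Iic k) = ENNReal.ofReal (1 - q ^ (k+1)) := by
    intro i k
    have hsetdec : Y i ⁻¹' Set.Iic k = ⋃ x ∈ Finset.range (k+1), {ω | Y i ω = x} := by
      ext ω; simp [Nat.lt_succ_iff]
    have hdisj : Set.PairwiseDisjoint (↑(Finset.range (k+1))) (fun x => {ω | Y i ω = x}) := by
      intro x _ y _ hxy
      refine Set.disjoint_left.2 fun ω hx hy => hxy ?_
      rw [← hx, ← hy]
    rw [hsetdec, measure_biUnion_finset hdisj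
      (fun x _ => hmeas i (measurableSet_singleton x))]
    have hsum : ∀ x ∈ Finset.range (k+1),
        μ {ω | Y i ω = x} = ENNReal.ofReal ((1 - q) * q ^ x) := by
      intro x _
      rw [hY i x]
      congr 1
      rw [hqdef]
      field_simp
      ring
    rw [Finset.sum_congr rfl hsum, ← ENNReal.ofReal_sum_of_nonneg
      (fun x _ => mul_nonneg (by linarith) (pow_nonneg hq0.le x))]
    congr 1
    have h := geom_sum_mul q (k+1)
    calc ∑ x ∈ Finset.range (k+1), (1 - q) * q ^ x
        = (1 - q) * ∑ x ∈ Finset.range (k+1), q ^ x := by rw [Finset.mul_sum]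
      _ = 1 - q ^ (k+1) := by linear_combination -h
  -- CDF of the max
  have hMcdf : ∀ k : ℕ, μ {ω | M ω ≤ k} = ENNReal.ofReal ((1 - q ^ (k+1)) ^ n ^ 2) := by
    intro k
    have hMle : {ω | M ω ≤ k} = ⋂ i ∈ (Finset.univ : Finset (Fin (n ^ 2))),
        Y i ⁻¹' Set.Iic k := by
      ext ω; simp [hMdef, Finset.sup_le_iff]
    rw [hMle, hind.measure_inter_preimage_eq_mul Finset.univ
      (sets := fun _ => Set.Iic k) (fun i _ => measurableSet_Iic)]
    have : ∀ i ∈ (Finset.univ : Finset (Fin (n ^ 2))),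
        μ (Y i ⁻¹' Set.Iic k) = ENNReal.ofReal (1 - q ^ (k+1)) := fun i _ => hYIic i k
    rw [Finset.prod_congr rfl this, Finset.prod_const, Finset.card_univ, Fintype.card_fin,
      ← ENNReal.ofReal_pow (by linarith [hqple1 (k+1)])]
  -- tail probabilities
  have hMtail : ∀ k : ℕ, μ {ω | k < M ω}
      = ENNReal.ofReal (GeoMaxAux.f l (n ^ 2) ((k:ℝ)+1)) := by
    intro k
    have hcompl : {ω | k < M ω} = {ω | M ω ≤ k}ᶜ := by
      ext ω; simp [not_le]
    have hms : MeasurableSet {ω | M ω ≤ k} := hMmeas measurableSet_Iic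
    rw [hcompl, measure_compl hms (measure_ne_top μ _), hMcdf k, measure_univ]
    have hfval : GeoMaxAux.f l (n ^ 2) ((k:ℝ)+1) = 1 - (1 - q ^ (k+1)) ^ n ^ 2 := by
      unfold GeoMaxAux.f
      rw [show ((k:ℝ)+1) = (((k+1:ℕ)):ℝ) by push_cast; ring, hqpow (k+1)]
    rw [hfval, ← ENNReal.ofReal_one, ← ENNReal.ofReal_sub _
      (pow_nonneg (by linarith [hqple1 (k+1)]) _)]
  -- summability
  have hsummable : Summable (fun k : ℕ => GeoMaxAux.f l (n ^ 2) ((k:ℝ)+1)) := by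
    refine (GeoMaxAux.summable_f (N := n ^ 2) hlpos).congr (fun k => ?_)
    push_cast; ring_nf
  have hfnonneg : ∀ k : ℕ, 0 ≤ GeoMaxAux.f l (n ^ 2) ((k:ℝ)+1) :=
    fun k => GeoMaxAux.f_nonneg hlpos (by positivity)
  -- lintegral identity
  have hlin : ∫⁻ ω, (M ω : ℝ≥0∞) ∂μ = ∑' k : ℕ, μ {ω' | k < M ω'} := by
    have hpt : ∀ ω, (M ω : ℝ≥0∞)
        = ∑' k : ℕ, Set.indicator {ω' | k < M ω'} (fun _ => (1:ℝ≥0∞)) ω := by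
      intro ω
      rw [tsum_eq_sum (s := Finset.range (M ω)) ?_]
      · have h1 : ∀ k ∈ Finset.range (M ω),
            Set.indicator {ω' | k < M ω'} (fun _ => (1:ℝ≥0∞)) ω = 1 := by
          intro k hk
          rw [Set.indicator_of_mem]
          exact Finset.mem_range.1 hk
        rw [Finset.sum_congr rfl h1]
        simp
      · intro k hk
        rw [Set.indicator_of_notMem]
        simpa using Finset.mem_range.not.1 hk
    calc ∫⁻ ω, (M ω : ℝ≥0∞) ∂μ
        = ∫⁻ ω, ∑' k : ℕ, Set.indicator {ω' | k < M ω'} (fun _ => (1:ℝ≥0∞)) ω ∂μ :=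
          lintegral_congr hpt
      _ = ∑' k : ℕ, ∫⁻ ω, Set.indicator {ω' | k < M ω'} (fun _ => (1:ℝ≥0∞)) ω ∂μ :=
          lintegral_tsum (fun k =>
            (measurable_const.indicator (hMmeas measurableSet_Ioi)).aemeasurable)
      _ = ∑' k : ℕ, μ {ω' | k < M ω'} := by
          refine tsum_congr (fun k => ?_)
          have hms : MeasurableSet {ω' | k < M ω'} := measurableSet_lt measurable_const hMmeas
          rw [lintegral_indicator hms (fun _ => (1:ℝ≥0∞))]
          simp
  have hto : ∫⁻ ω, (M ω : ℝ≥0∞) ∂μ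
      = ENNReal.ofReal (∑' k : ℕ, GeoMaxAux.f l (n ^ 2) ((k:ℝ)+1)) := by
    rw [hlin, ENNReal.ofReal_tsum_of_nonneg hfnonneg hsummable]
    exact tsum_congr hMtail
  have hbochner : ∫ ω, ((M ω : ℕ) : ℝ) ∂μ
      = ∑' k : ℕ, GeoMaxAux.f l (n ^ 2) ((k:ℝ)+1) := by
    rw [integral_eq_lintegral_of_nonneg_ae
      (Filter.Eventually.of_forall fun ω => Nat.cast_nonneg _)
      ((measurable_from_top.comp hMmeas).aestronglyMeasurable)]
    have hcast : ∀ ω, ENNReal.ofReal ((M ω : ℕ) : ℝ) = (M ω : ℝ≥0∞) :=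
      fun ω => ENNReal.ofReal_natCast _
    rw [lintegral_congr hcast, hto, ENNReal.toReal_ofReal (tsum_nonneg hfnonneg)]
  have hI := GeoMaxAux.integral_f (N := n ^ 2) (l := l) hlpos
  have h1 := GeoMaxAux.tsum_lt_integral (N := n ^ 2) (l := l) hlpos hN
  have h2 := GeoMaxAux.integral_lt_tsum (N := n ^ 2) (l := l) hlpos hN
  rw [hI] at h1 h2
  rw [show (∫ ω, ((Finset.univ.sup fun i => Y i ω : ℕ) : ℝ) ∂μ)
    = ∫ ω, ((M ω : ℕ) : ℝ) ∂μ from rfl, hbochner]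
  constructor <;> linarith
end
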